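/- arXiv:1802.04685 — 3 statements merged into one kernel-verified Lean document; each statement's English description precedes it below -/
import Mathlib

section
/- Let F be any field and C, D ∈ F[x,y]. If C and D are algebraically dependent over F, then Jac(C,D) = 0. -/
open MvPolynomial

/-- The Jacobian of two polynomials `p, q ∈ R[x,y]`:
`Jac(p,q) = (∂p/∂x)(∂q/∂y) − (∂p/∂y)(∂q/∂x)`. -/
noncomputable def Jac {R : Type*} [CommRing R]
    (p q : MvPolynomial (Fin 2) R) : MvPolynomial (Fin 2) R :=
  pderiv 0 p * pderiv 1 q - pderiv 1 p * pderiv 0 q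

lemma coeff_pderiv' {K : Type*} [CommSemiring K] (i : Fin 2) (m : Fin 2 →₀ ℕ)
    (f : MvPolynomial (Fin 2) K) :
    coeff m (pderiv i f) = (m i + 1 : ℕ) * coeff (m + Finsupp.single i 1) f := by
  induction f using MvPolynomial.induction_on' with
  | monomial s a =>
    rw [pderiv_monomial, coeff_monomial, coeff_monomial]
    have hadd : ∀ j : Fin 2, (m + Finsupp.single i 1 : Fin 2 →₀ ℕ) j
        = m j + (if i = j then 1 else 0) := by
      intro j; rw [Finsupp.add_apply, Finsupp.single_apply]
    have hsub : ∀ j : Fin 2, (s - Finsupp.single i 1 : Fin 2 →₀ ℕ) j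
        = s j - (if i = j then 1 else 0) := by
      intro j; rw [Finsupp.tsub_apply, Finsupp.single_apply]
    split_ifs with h1 h2 h2
    · have hsi : s i = m i + 1 := by
        have := DFunLike.congr_fun h2 i
        rw [hadd, if_pos rfl] at this; omega
      rw [hsi]; push_cast; ring
    · have hsi : s i = 0 := by
        by_contra hne
        apply h2
        ext j
        have := DFunLike.congr_fun h1 j
        rw [hsub] at this
        rw [hadd]
        rcases eq_or_ne i j with rfl | hij
        · rw [if_pos rfl] at this ⊢; omega
        · rw [if_neg hij] at this ⊢; omega
      rw [hsi]; simp
    · exfalso; apply h1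
      ext j
      have := DFunLike.congr_fun h2 j
      rw [hadd] at this
      rw [hsub]
      rcases eq_or_ne i j with rfl | hij
      · rw [if_pos rfl] at this ⊢; omega
      · rw [if_neg hij] at this ⊢; omega
    · simp
  | add p q hp hq => simp [map_add, hp, hq, mul_add]

lemma totalDegree_pderiv_lt {K : Type*} [CommSemiring K] (i : Fin 2)
    {f : MvPolynomial (Fin 2) K} (h0 : 0 < f.totalDegree) :
    totalDegree (pderiv i f) < f.totalDegree := by
  rcases eq_or_ne (pderiv i f) 0 with h | h
  · rw [h]; simpa using h0
  rw [totalDegree, Finset.sup_lt_iff (by simpa using h0)]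
  intro m hm
  rw [MvPolynomial.mem_support_iff, coeff_pderiv'] at hm
  have hc : coeff (m + Finsupp.single i 1) f ≠ 0 := by
    intro hc; simp [hc] at hm
  have hle := le_totalDegree (MvPolynomial.mem_support_iff.2 hc)
  have hsum : (m + Finsupp.single i 1).sum (fun _ e => e) = m.sum (fun _ e => e) + 1 := by
    rw [Finsupp.sum_add_index (by simp) (by intros; rfl)]
    simp
  rw [hsum] at hle
  omega

lemma pderiv_aeval' {K : Type*} [CommRing K] (v : Fin 2 → MvPolynomial (Fin 2) K)
    (i : Fin 2) (G : MvPolynomial (Fin 2) K) :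
    pderiv i (aeval v G) =
      aeval v (pderiv 0 G) * pderiv i (v 0) + aeval v (pderiv 1 G) * pderiv i (v 1) := by
  induction G using MvPolynomial.induction_on with
  | C c => simp
  | add p q hp hq => simp only [map_add, hp, hq]; ring
  | mul_X p j hp =>
    have e : aeval v (p * X j) = aeval v p * v j := by simp
    have h01 : pderiv (0 : Fin 2) (X 1 : MvPolynomial (Fin 2) K) = 0 := pderiv_X_of_ne (by decide)
    have h10 : pderiv (1 : Fin 2) (X 0 : MvPolynomial (Fin 2) K) = 0 := pderiv_X_of_ne (by decide)
    obtain rfl | rfl : j = 0 ∨ j = 1 := by omega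
    all_goals
      simp only [e, map_mul, pderiv_mul, hp, map_add, pderiv_X_self, h01, h10, map_zero,
        map_one, aeval_X, Fin.isValue, mul_zero, mul_one, add_zero, zero_add]
    all_goals ring

lemma finsupp_fin2_sum (d : Fin 2 →₀ ℕ) : (d.sum fun _ e => e) = d 0 + d 1 := by
  rw [Finsupp.sum_fintype]
  · exact Fin.sum_univ_two _
  · intro _; rfl

/-- Main inductive lemma, over an algebraically closed field. -/
lemma jac_aux {K : Type*} [Field K] [IsAlgClosed K] (P Q : MvPolynomial (Fin 2) K) :
    ∀ n (G : MvPolynomial (Fin 2) K), G.totalDegree ≤ n → G ≠ 0 →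
      aeval ![P, Q] G = 0 → Jac P Q = 0 := by
  intro n
  induction n using Nat.strong_induction_on with
  | _ n IH =>
  intro G hdeg hG h0
  by_contra hJ
  set v : Fin 2 → MvPolynomial (Fin 2) K := ![P, Q] with hv
  have hv0 : v 0 = P := rfl
  have hv1 : v 1 = Q := rfl
  -- G is not constant
  have hd0 : 0 < G.totalDegree := by
    rcases Nat.eq_zero_or_pos G.totalDegree with h | h
    · exfalso
      have hsupp := (totalDegree_eq_zero_iff (Fin 2) G).mp h
      have hGC : G = C (coeff 0 G) := by
        ext m'
        rcases eq_or_ne m' 0 with rfl | hm'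
        · simp
        · have hns : m' ∉ G.support := by
            intro hmem
            apply hm'
            ext i
            exact hsupp m' hmem i
          rw [MvPolynomial.notMem_support_iff.mp hns, coeff_C, if_neg (Ne.symm hm')]
      rw [hGC, aeval_C] at h0
      have hc : coeff 0 G = 0 := by
        have := congrArg (MvPolynomial.coeff 0) h0
        simpa using this
      exact hG (by rw [hGC, hc, map_zero])
    · exact h
  set A : MvPolynomial (Fin 2) K := aeval v (pderiv 0 G) with hA'
  set B : MvPolynomial (Fin 2) K := aeval v (pderiv 1 G) with hB'
  have e0 : A * pderiv 0 P + B * pderiv 0 Q = 0 := by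
    have h := pderiv_aeval' v 0 G
    rw [h0, map_zero, hv0, hv1] at h
    exact h.symm
  have e1 : A * pderiv 1 P + B * pderiv 1 Q = 0 := by
    have h := pderiv_aeval' v 1 G
    rw [h0, map_zero, hv0, hv1] at h
    exact h.symm
  have hAJ : A * Jac P Q = 0 := by
    show A * (pderiv 0 P * pderiv 1 Q - pderiv 1 P * pderiv 0 Q) = 0
    linear_combination pderiv 1 Q * e0 - pderiv 0 Q * e1
  have hBJ : B * Jac P Q = 0 := by
    show B * (pderiv 0 P * pderiv 1 Q - pderiv 1 P * pderiv 0 Q) = 0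
    linear_combination pderiv 0 P * e1 - pderiv 1 P * e0
  have hA : A = 0 := by
    rcases mul_eq_zero.mp hAJ with h | h
    · exact h
    · exact absurd h hJ
  have hB : B = 0 := by
    rcases mul_eq_zero.mp hBJ with h | h
    · exact h
    · exact absurd h hJ
  -- both partial derivatives of G vanish identically
  have hpd : ∀ i : Fin 2, pderiv i G = 0 := by
    intro i
    by_contra hne
    have hlt : totalDegree (pderiv i G) < n :=
      lt_of_lt_of_le (totalDegree_pderiv_lt i hd0) hdeg
    have hval : aeval v (pderiv i G) = 0 := by
      obtain rfl | rfl : i = 0 ∨ i = 1 := by omega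
      · exact hA
      · exact hB
    exact hJ (IH _ hlt (pderiv i G) le_rfl hne hval)
  -- coefficient analysis
  have hcast : ∀ m ∈ G.support, ∀ i : Fin 2, ((m i : K)) = 0 := by
    intro m hm i
    rcases Nat.eq_zero_or_pos (m i) with h | h
    · simp [h]
    · have hc := coeff_pderiv' i (m - Finsupp.single i 1) G
      rw [hpd i, coeff_zero] at hc
      have he : (m - Finsupp.single i 1 : Fin 2 →₀ ℕ) + Finsupp.single i 1 = m := by
        ext j
        rw [Finsupp.add_apply, Finsupp.tsub_apply, Finsupp.single_apply]
        rcases eq_or_ne i j with rfl | hij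
        · rw [if_pos rfl]; omega
        · rw [if_neg hij]; omega
      have hii : ((m - Finsupp.single i 1 : Fin 2 →₀ ℕ) i + 1 : ℕ) = m i := by
        rw [Finsupp.tsub_apply, Finsupp.single_apply, if_pos rfl]; omega
      rw [he] at hc
      have hcm : coeff m G ≠ 0 := MvPolynomial.mem_support_iff.mp hm
      have : ((((m - Finsupp.single i 1 : Fin 2 →₀ ℕ) i + 1 : ℕ) : K)) = 0 := by
        rcases mul_eq_zero.mp hc.symm with h' | h'
        · exact h'
        · exact absurd h' hcm
      rwa [hii] at this
  obtain ⟨p, hp⟩ := CharP.exists K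
  rcases CharP.char_is_prime_or_zero K p with hprime | hzero
  · -- positive characteristic: Frobenius descent
    haveI := Fact.mk hprime
    have hp2 : 2 ≤ p := hprime.two_le
    have hdvd : ∀ m ∈ G.support, ∀ i : Fin 2, p ∣ m i := fun m hm i =>
      (CharP.cast_eq_zero_iff K p _).mp (hcast m hm i)
    choose ρ hρ using fun c : K => surjective_frobenius K p c
    set dv : (Fin 2 →₀ ℕ) → (Fin 2 →₀ ℕ) :=
      fun m => Finsupp.mapRange (· / p) (Nat.zero_div p) m with hdv
    have hdvap : ∀ (m : Fin 2 →₀ ℕ) (i : Fin 2), dv m i = m i / p := fun m i =>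
      Finsupp.mapRange_apply
    have hsmul : ∀ m ∈ G.support, p • dv m = m := by
      intro m hm
      ext j
      rw [Finsupp.smul_apply, hdvap, smul_eq_mul]
      exact Nat.mul_div_cancel' (hdvd m hm j)
    set H : MvPolynomial (Fin 2) K :=
      ∑ m ∈ G.support, monomial (dv m) (ρ (coeff m G)) with hH
    have hHp : H ^ p = G := by
      have : H ^ p = frobenius (MvPolynomial (Fin 2) K) p H := rfl
      rw [this, hH, map_sum]
      have : ∀ m ∈ G.support,
          frobenius (MvPolynomial (Fin 2) K) p (monomial (dv m) (ρ (coeff m G)))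
            = monomial m (coeff m G) := by
        intro m hm
        rw [frobenius_def, monomial_pow, hsmul m hm]
        congr 1
        have := hρ (coeff m G)
        rwa [frobenius_def] at this
      rw [Finset.sum_congr rfl this]
      exact support_sum_monomial_coeff G
    have hHne : H ≠ 0 := by
      intro h
      apply hG
      rw [← hHp, h, zero_pow hprime.ne_zero]
    have hHval : aeval v H = 0 := by
      have : (aeval v H) ^ p = 0 := by rw [← map_pow, hHp, h0]
      exact pow_eq_zero_iff hprime.ne_zero |>.mp this
    have hHdeg : totalDegree H < n := by
      have hn1 : 1 ≤ n := le_trans hd0 hdeg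
      have hb : ∀ m ∈ G.support, totalDegree (monomial (dv m) (ρ (coeff m G))) < n := by
        intro m hm
        refine lt_of_le_of_lt (totalDegree_monomial_le _ _) ?_
        have hms : (m.sum fun _ e => e) ≤ n :=
          le_trans (le_totalDegree hm) hdeg
        show (Finsupp.sum (dv m) fun _ e => e) < n
        rw [finsupp_fin2_sum] at hms ⊢
        have h0' := hdvd m hm 0
        have h1' := hdvd m hm 1
        rw [hdvap, hdvap]
        obtain ⟨a, ha⟩ := h0'
        obtain ⟨b, hb⟩ := h1'
        rw [ha, hb, Nat.mul_div_cancel_left a hprime.pos, Nat.mul_div_cancel_left b hprime.pos]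
        nlinarith
      calc totalDegree H ≤ G.support.sup fun m => totalDegree (monomial (dv m) (ρ (coeff m G))) :=
            totalDegree_finset_sum _ _
        _ < n := by
            rw [Finset.sup_lt_iff (show ⊥ < n from hn1)]
            exact hb
    exact hJ (IH _ hHdeg H le_rfl hHne hHval)
  · -- characteristic zero: G would be constant
    subst hzero
    haveI : CharZero K := CharP.charP_to_charZero K
    have hall : ∀ m ∈ G.support, m = 0 := by
      intro m hm
      ext i
      exact_mod_cast hcast m hm i
    have : G.totalDegree = 0 := by
      rw [totalDegree]
      refine le_antisymm (Finset.sup_le fun m hm => ?_) (Nat.zero_le _)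
      rw [hall m hm]
      simp
    omega

/-- **Jacobi's theorem, part (1).** Over any field `F`, if `P, Q ∈ F[x,y]` are
algebraically dependent over `F`, then `Jac(P,Q) = 0`. -/
theorem jacobi_part_one {F : Type*} [Field F]
    (P Q : MvPolynomial (Fin 2) F)
    (hdep : ¬ AlgebraicIndependent F ![P, Q]) :
    Jac P Q = 0 := by
  rw [AlgebraicIndependent] at hdep
  rw [Function.not_injective_iff] at hdep
  obtain ⟨a, b, hab, hne⟩ := hdep
  set G : MvPolynomial (Fin 2) F := a - b with hGdef
  have hG : G ≠ 0 := sub_ne_zero.mpr hne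
  have h0 : aeval ![P, Q] G = 0 := by
    rw [hGdef, map_sub, hab, sub_self]
  set K := AlgebraicClosure F
  set φ : F →+* K := algebraMap F K
  set ψ : MvPolynomial (Fin 2) F →+* MvPolynomial (Fin 2) K := MvPolynomial.map φ with hψ
  have hinj : Function.Injective ψ := MvPolynomial.map_injective φ φ.injective
  have hcomm : ∀ (g : MvPolynomial (Fin 2) F),
      aeval ![ψ P, ψ Q] (ψ g) = ψ (aeval ![P, Q] g) := by
    intro g
    rw [map_aeval]
    rw [aeval_def, hψ, eval₂_map]
    rw [coe_eval₂Hom]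
    congr 1
    · ext a
      simp [ψ]
    · funext i
      fin_cases i <;> rfl
  have h0' : aeval ![ψ P, ψ Q] (ψ G) = 0 := by rw [hcomm, h0, map_zero]
  have hGne' : ψ G ≠ 0 := fun h => hG (hinj (by rw [h, map_zero]))
  have hjac : Jac (ψ P) (ψ Q) = 0 :=
    jac_aux (ψ P) (ψ Q) (totalDegree (ψ G)) (ψ G) le_rfl hGne' h0'
  have hmapjac : ψ (Jac P Q) = Jac (ψ P) (ψ Q) := by
    simp only [Jac, map_sub, map_mul, hψ]
    rw [pderiv_map, pderiv_map, pderiv_map, pderiv_map]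
  apply hinj
  rw [hmapjac, hjac, map_zero]
end

section
/- Let D be an integral domain of characteristic zero with fraction field Q(D), and let A, B, w ∈ D[x,y]. Suppose Jac(A,B) is a unit of D[x,y] (i.e., a constant that is a unit of D) and Jac(A,w) = 0. Then the image of w in Q(D)[x,y] lies in Q(D)[Ā], the Q(D)-subalgebra of Q(D)[x,y] generated by the image Ā of A under the canonical map D[x,y] → Q(D)[x,y] induced by D → Q(D). -/
open MvPolynomial

namespace CMWAux

section Coeff

variable {σ : Type*} [DecidableEq σ] {R : Type*} [CommSemiring R]

lemma coeff_pderiv (i : σ) (f : MvPolynomial σ R) (d : σ →₀ ℕ) :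
    coeff d (pderiv i f) =
      coeff (d + Finsupp.single i 1) f * ((d i : R) + 1) := by
  induction f using MvPolynomial.induction_on' with
  | add p q hp hq => simp [hp, hq, add_mul]
  | monomial s a =>
    rw [pderiv_monomial, coeff_monomial, coeff_monomial]
    by_cases h : s = d + Finsupp.single i 1
    · subst h
      rw [if_pos (add_tsub_cancel_right d (Finsupp.single i 1)), if_pos rfl]
      have : ((d + Finsupp.single i 1 : σ →₀ ℕ)) i = d i + 1 := by
        simp [Finsupp.add_apply]
      rw [this]
      push_cast
      ring
    · rw [if_neg h, zero_mul]
      by_cases hd : s - Finsupp.single i 1 = d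
      · rw [if_pos hd]
        by_cases hsi : s i = 0
        · rw [hsi]; simp
        · exfalso
          apply h
          rw [← hd, tsub_add_cancel_of_le]
          exact Finsupp.single_le_iff.mpr (Nat.one_le_iff_ne_zero.mpr hsi)
      · rw [if_neg hd]

lemma pderiv_comm (i j : σ) (f : MvPolynomial σ R) :
    pderiv i (pderiv j f) = pderiv j (pderiv i f) := by
  ext d
  simp only [coeff_pderiv]
  rw [add_right_comm d (Finsupp.single i 1) (Finsupp.single j 1)]
  by_cases hij : i = j
  · subst hij; ring
  · have h1 : ((d + Finsupp.single i 1 : σ →₀ ℕ)) j = d j := by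
      simp [Finsupp.add_apply, Finsupp.single_apply, hij]
    have h2 : ((d + Finsupp.single j 1 : σ →₀ ℕ)) i = d i := by
      simp [Finsupp.add_apply, Finsupp.single_apply, Ne.symm hij]
    rw [h1, h2]
    ring

lemma totalDegree_pderiv_lt {i : σ} {f : MvPolynomial σ R}
    (hf : pderiv i f ≠ 0) : (pderiv i f).totalDegree < f.totalDegree := by
  obtain ⟨d, hd, hds⟩ := Finset.exists_mem_eq_sup (pderiv i f).support
    (support_nonempty.mpr hf) (fun s => s.sum fun _ e => e)
  have hcoeff : coeff (d + Finsupp.single i 1) f ≠ 0 := by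
    intro h0
    apply mem_support_iff.mp hd
    rw [coeff_pderiv, h0, zero_mul]
  have hle := le_totalDegree (mem_support_iff.mpr hcoeff)
  have hsum : ((d + Finsupp.single i 1).sum fun _ e => e) = (d.sum fun _ e => e) + 1 := by
    rw [Finsupp.sum_add_index' (fun _ => rfl) (fun _ _ _ => rfl),
      Finsupp.sum_single_index rfl]
  rw [totalDegree, hds]
  omega

lemma eq_C_of_pderiv_eq_zero' {R : Type*} [CommRing R] [NoZeroDivisors R] [CharZero R]
    {f : MvPolynomial σ R} (h : ∀ i, pderiv i f = 0) : f = C (coeff 0 f) := by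
  ext m
  by_cases hm : m = 0
  · subst hm; simp
  · rw [coeff_C, if_neg (Ne.symm hm)]
    obtain ⟨i, hi⟩ : ∃ i, m i ≠ 0 := by
      by_contra hc
      push_neg at hc
      exact hm (Finsupp.ext hc)
    have hkey := coeff_pderiv i f (m - Finsupp.single i 1)
    rw [h i, coeff_zero] at hkey
    have hms : (m - Finsupp.single i 1) + Finsupp.single i 1 = m :=
      tsub_add_cancel_of_le (Finsupp.single_le_iff.mpr (Nat.one_le_iff_ne_zero.mpr hi))
    rw [hms] at hkey
    rcases mul_eq_zero.mp hkey.symm with h1 | h2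
    · exact h1
    · exfalso
      have : (((((m - Finsupp.single i 1 : σ →₀ ℕ)) i : ℕ) + 1 : ℕ) : R) ≠ 0 :=
        Nat.cast_ne_zero.mpr (Nat.succ_ne_zero _)
      rw [Nat.cast_add, Nat.cast_one] at this
      exact this h2

end Coeff

section Degree

variable {σ : Type*} {R : Type*} [CommRing R]

lemma eq_C_of_totalDegree_eq_zero {p : MvPolynomial σ R} (h : p.totalDegree = 0) :
    p = C (coeff 0 p) := by
  classical
  ext m
  by_cases hm : m = 0
  · subst hm; simp
  · rw [coeff_C, if_neg (Ne.symm hm)]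
    by_contra hc
    apply hm
    have hmem : m ∈ p.support := mem_support_iff.mpr hc
    have := (totalDegree_eq_zero_iff σ p).mp h m hmem
    ext x
    exact this x

lemma top_ne_zero {p : MvPolynomial σ R} (hp : p ≠ 0) :
    homogeneousComponent p.totalDegree p ≠ 0 := by
  obtain ⟨d, hd, hds⟩ := Finset.exists_mem_eq_sup p.support
    (support_nonempty.mpr hp) (fun s => s.sum fun _ e => e)
  intro h0
  have hcd : coeff d (homogeneousComponent p.totalDegree p) = coeff d p := by
    rw [coeff_homogeneousComponent, if_pos]
    show (d.sum fun _ e => e) = p.totalDegree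
    rw [totalDegree, hds]
  rw [h0, coeff_zero] at hcd
  exact mem_support_iff.mp hd hcd.symm

lemma top_mul [NoZeroDivisors R] {p q : MvPolynomial σ R} (hp : p ≠ 0) (hq : q ≠ 0) :
    homogeneousComponent (p.totalDegree + q.totalDegree) (p * q) =
      homogeneousComponent p.totalDegree p * homogeneousComponent q.totalDegree q := by
  set dp := p.totalDegree with hdp
  set dq := q.totalDegree with hdq
  conv_lhs => rw [← sum_homogeneousComponent p, ← sum_homogeneousComponent q,
    Finset.sum_mul_sum]
  rw [map_sum]
  have key : ∀ i ∈ Finset.range (dp + 1), ∀ j ∈ Finset.range (dq + 1),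
      homogeneousComponent (dp + dq) (homogeneousComponent i p * homogeneousComponent j q) =
        if i = dp ∧ j = dq then homogeneousComponent i p * homogeneousComponent j q else 0 := by
    intro i hi j hj
    have hmem : homogeneousComponent i p * homogeneousComponent j q ∈
        homogeneousSubmodule σ R (i + j) :=
      (mem_homogeneousSubmodule _ _).mpr
        ((homogeneousComponent_isHomogeneous i p).mul (homogeneousComponent_isHomogeneous j q))
    rw [homogeneousComponent_of_mem hmem]
    simp only [Finset.mem_range] at hi hj
    congr 1
    rw [eq_iff_iff]
    omega
  calc (∑ i ∈ Finset.range (dp + 1), homogeneousComponent (dp + dq)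
          (∑ j ∈ Finset.range (dq + 1), homogeneousComponent i p * homogeneousComponent j q))
      = ∑ i ∈ Finset.range (dp + 1), ∑ j ∈ Finset.range (dq + 1),
          (if i = dp ∧ j = dq then homogeneousComponent i p * homogeneousComponent j q else 0) := by
        refine Finset.sum_congr rfl fun i hi => ?_
        rw [map_sum]
        exact Finset.sum_congr rfl fun j hj => key i hi j hj
    _ = homogeneousComponent dp p * homogeneousComponent dq q := by
        rw [Finset.sum_eq_single_of_mem dp (Finset.self_mem_range_succ dp)]
        · rw [Finset.sum_eq_single_of_mem dq (Finset.self_mem_range_succ dq)]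
          · simp
          · intro j _ hj; simp [hj]
        · intro i _ hi
          apply Finset.sum_eq_zero
          intro j _
          simp [hi]

lemma totalDegree_add_le_mul [NoZeroDivisors R] {p q : MvPolynomial σ R}
    (hp : p ≠ 0) (hq : q ≠ 0) :
    p.totalDegree + q.totalDegree ≤ (p * q).totalDegree := by
  by_contra hlt
  push_neg at hlt
  have h0 := homogeneousComponent_eq_zero (p.totalDegree + q.totalDegree) (p * q) hlt
  rw [top_mul hp hq] at h0
  exact mul_ne_zero (top_ne_zero hp) (top_ne_zero hq) h0

lemma exists_C_of_isUnit {F : Type*} [Field F] {p : MvPolynomial σ F} (hp : IsUnit p) :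
    ∃ k : F, k ≠ 0 ∧ p = C k := by
  obtain ⟨u, rfl⟩ := hp
  have h1 : (u : MvPolynomial σ F) * ((u⁻¹ : (MvPolynomial σ F)ˣ) : MvPolynomial σ F) = 1 :=
    u.mul_inv
  have hp0 : (u : MvPolynomial σ F) ≠ 0 := u.ne_zero
  have hq0 : ((u⁻¹ : (MvPolynomial σ F)ˣ) : MvPolynomial σ F) ≠ 0 := Units.ne_zero _
  have := totalDegree_add_le_mul hp0 hq0
  rw [h1, totalDegree_one, Nat.le_zero, Nat.add_eq_zero] at this
  refine ⟨coeff 0 (u : MvPolynomial σ F), ?_, eq_C_of_totalDegree_eq_zero this.1⟩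
  intro hk
  apply hp0
  rw [eq_C_of_totalDegree_eq_zero this.1, hk, map_zero]

end Degree

lemma exists_antideriv {F : Type*} [Field F] [CharZero F] (P : Polynomial F) :
    ∃ G : Polynomial F, Polynomial.derivative G = P := by
  induction P using Polynomial.induction_on' with
  | add p q hp hq =>
    obtain ⟨Gp, hGp⟩ := hp
    obtain ⟨Gq, hGq⟩ := hq
    exact ⟨Gp + Gq, by rw [Polynomial.derivative_add, hGp, hGq]⟩
  | monomial n a =>
    refine ⟨Polynomial.C (a / (n + 1)) * Polynomial.X ^ (n + 1), ?_⟩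
    rw [Polynomial.derivative_C_mul_X_pow]
    have hne : ((n : F) + 1) ≠ 0 := by
      have : ((n + 1 : ℕ) : F) ≠ 0 := Nat.cast_ne_zero.mpr (Nat.succ_ne_zero _)
      push_cast at this
      exact this
    rw [Nat.cast_add, Nat.cast_one, Nat.add_sub_cancel, div_mul_cancel₀ a hne,
      Polynomial.C_mul_X_pow_eq_monomial]

section Main

variable {F : Type*} [Field F] [CharZero F]

lemma C_mem_adjoin (c : F) (a : MvPolynomial (Fin 2) F) :
    (C c : MvPolynomial (Fin 2) F) ∈ Algebra.adjoin F {a} := by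
  have : (C c : MvPolynomial (Fin 2) F) = algebraMap F (MvPolynomial (Fin 2) F) c := rfl
  rw [this]
  exact Subalgebra.algebraMap_mem _ c

theorem key (n : ℕ) : ∀ v a b : MvPolynomial (Fin 2) F, v.totalDegree ≤ n →
    IsUnit (Jac a b) → Jac a v = 0 → v ∈ Algebra.adjoin F {a} := by
  induction n with
  | zero =>
    intro v a b hv _ _
    rw [eq_C_of_totalDegree_eq_zero (Nat.le_zero.mp hv)]
    exact C_mem_adjoin _ a
  | succ n IH =>
    intro v a b hv hAB hAv
    by_cases hvc : v.totalDegree = 0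
    · rw [eq_C_of_totalDegree_eq_zero hvc]
      exact C_mem_adjoin _ a
    obtain ⟨k, hk0, hCk⟩ := exists_C_of_isUnit hAB
    have key0 : C k * pderiv 0 v = Jac v b * pderiv 0 a := by
      rw [← hCk]
      simp only [Jac] at hAv ⊢
      linear_combination pderiv 0 b * hAv
    have key1 : C k * pderiv 1 v = Jac v b * pderiv 1 a := by
      rw [← hCk]
      simp only [Jac] at hAv ⊢
      linear_combination pderiv 1 b * hAv
    have key_eq : ∀ i : Fin 2, C k * pderiv i v = Jac v b * pderiv i a := by
      intro i; fin_cases i; exacts [key0, key1]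
    set h : MvPolynomial (Fin 2) F := C k⁻¹ * Jac v b with hh
    have hvi : ∀ i : Fin 2, pderiv i v = h * pderiv i a := by
      intro i
      calc pderiv i v = C k⁻¹ * (C k * pderiv i v) := by
            rw [← mul_assoc, ← C_mul, inv_mul_cancel₀ hk0, C_1, one_mul]
        _ = C k⁻¹ * (Jac v b * pderiv i a) := by rw [key_eq i]
        _ = h * pderiv i a := by rw [hh]; ring
    by_cases hh0 : h = 0
    · have hz : ∀ i, pderiv i v = 0 := by
        intro i; rw [hvi i, hh0, zero_mul]
      rw [eq_C_of_pderiv_eq_zero' hz]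
      exact C_mem_adjoin _ a
    have hJah : Jac a h = 0 := by
      have h01 : pderiv 0 (pderiv 1 v) = pderiv 1 (pderiv 0 v) := pderiv_comm 0 1 v
      rw [hvi 0, hvi 1] at h01
      simp only [pderiv_mul] at h01
      have hcomm : pderiv 0 (pderiv 1 a) = pderiv 1 (pderiv 0 a) := pderiv_comm 0 1 a
      simp only [Jac]
      linear_combination h * hcomm - h01
    have hex : ∃ i : Fin 2, pderiv i v ≠ 0 := by
      by_contra hc
      push_neg at hc
      apply hvc
      rw [eq_C_of_pderiv_eq_zero' hc]
      exact totalDegree_C _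
    obtain ⟨i, hvine⟩ := hex
    have hai : pderiv i a ≠ 0 := by
      intro h0; apply hvine; rw [hvi i, h0, mul_zero]
    have hdeg : h.totalDegree ≤ n := by
      have h1 := totalDegree_add_le_mul hh0 hai
      rw [← hvi i] at h1
      have h2 := totalDegree_pderiv_lt hvine
      omega
    have hmem := IH h a b hdeg hAB hJah
    rw [Algebra.adjoin_singleton_eq_range_aeval] at hmem
    obtain ⟨P, hP⟩ := hmem
    have hP' : Polynomial.aeval a P = h := hP
    obtain ⟨G, hG⟩ := exists_antideriv P
    have hu : ∀ j : Fin 2, pderiv j (v - Polynomial.aeval a G) = 0 := by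
      intro j
      rw [map_sub, Derivation.map_aeval, hG, smul_eq_mul, hP', hvi j, sub_self]
    have hconst := eq_C_of_pderiv_eq_zero' hu
    have hv_eq : v = Polynomial.aeval a G + C (coeff 0 (v - Polynomial.aeval a G)) := by
      rw [← hconst]; ring
    rw [hv_eq]
    refine add_mem ?_ (C_mem_adjoin _ a)
    rw [Algebra.adjoin_singleton_eq_range_aeval]
    exact ⟨G, rfl⟩

end Main

end CMWAux

/-- **CMW's theorem over an integral domain `D` of characteristic zero, fraction-field
version.** If `Jac(A,B)` is a unit of `D[x,y]` and `Jac(A,w) = 0`, then the image of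
`w` in `Q(D)[x,y]` lies in `Q(D)[Ā]`, where `Ā` is the image of `A` under the
canonical map `D[x,y] → Q(D)[x,y]`. -/
theorem cmw_over_domain_fractionField {D : Type*} [CommRing D] [IsDomain D] [CharZero D]
    (A B w : MvPolynomial (Fin 2) D)
    (hAB : IsUnit (Jac A B)) (hAw : Jac A w = 0) :
    MvPolynomial.map (algebraMap D (FractionRing D)) w ∈
      Algebra.adjoin (FractionRing D)
        {MvPolynomial.map (algebraMap D (FractionRing D)) A} := by
  haveI : CharZero (FractionRing D) :=
    charZero_of_injective_algebraMap (IsFractionRing.injective D (FractionRing D))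
  set φ := algebraMap D (FractionRing D) with hφ
  have hmap : ∀ p q : MvPolynomial (Fin 2) D,
      Jac (MvPolynomial.map φ p) (MvPolynomial.map φ q) = MvPolynomial.map φ (Jac p q) := by
    intro p q
    simp only [Jac, pderiv_map, map_sub, map_mul]
  exact CMWAux.key (MvPolynomial.map φ w).totalDegree (MvPolynomial.map φ w)
    (MvPolynomial.map φ A) (MvPolynomial.map φ B) le_rfl
    (by rw [hmap]; exact hAB.map (MvPolynomial.map φ))
    (by rw [hmap, hAw, map_zero])
end

section
/- Let D be an integral domain of characteristic zero. Assume the two-dimensional Jacobian Conjecture holds over D: every D-algebra endomorphism f of D[x,y] whose Jacobian Jac(f(x), f(y)) is a unit of D[x,y] is an automorphism of D[x,y]. Then the two-dimensional Centralizer Conjecture holds over D: for all A, B, w ∈ D[x,y], if Jac(A,B) is a unit of D[x,y] and Jac(A,w) = 0, then w lies in D[A], the D-subalgebra of D[x,y] generated by A. -/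
open MvPolynomial

lemma coeff_pderiv_aux {D : Type*} [CommRing D] (i : Fin 2) (m : Fin 2 →₀ ℕ)
    (p : MvPolynomial (Fin 2) D) :
    coeff m (pderiv i p) = (m i + 1 : ℕ) * coeff (m + Finsupp.single i 1) p := by
  induction p using MvPolynomial.induction_on' with
  | monomial s a =>
      rw [pderiv_monomial, coeff_monomial, coeff_monomial]
      by_cases h : s = m + Finsupp.single i 1
      · subst h
        simp [add_tsub_cancel_right, Finsupp.add_apply, Finsupp.single_apply, mul_comm]
      · rw [if_neg h]
        by_cases h2 : s - Finsupp.single i 1 = m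
        · rcases Nat.eq_zero_or_pos (s i) with hsi | hsi
          · simp [hsi]
          · exfalso; apply h
            ext j
            have hj := congrArg (fun f => f j) h2
            simp only [Finsupp.tsub_apply, Finsupp.single_apply] at hj
            simp only [Finsupp.add_apply, Finsupp.single_apply]
            by_cases hji : j = i
            · subst hji; simp at hj ⊢; omega
            · simp [Ne.symm hji] at hj ⊢; omega
        · rw [if_neg h2, mul_zero]
  | add p q hp hq => simp [hp, hq]; ring

lemma pderiv_aeval_fin2 {D : Type*} [CommRing D] (g : Fin 2 → MvPolynomial (Fin 2) D)
    (i : Fin 2) (p : MvPolynomial (Fin 2) D) :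
    pderiv i (aeval g p) =
      aeval g (pderiv 0 p) * pderiv i (g 0) + aeval g (pderiv 1 p) * pderiv i (g 1) := by
  induction p using MvPolynomial.induction_on with
  | C a => simp
  | add p q hp hq => simp only [map_add, hp, hq]; ring
  | mul_X p j hp =>
      have h01 : (0 : Fin 2) ≠ 1 := by decide
      fin_cases j <;>
      · show pderiv i (aeval g (p * X _)) = _
        rw [map_mul, aeval_X, pderiv_mul, hp]
        simp [pderiv_X_self, pderiv_X_of_ne h01, pderiv_X_of_ne h01.symm]
        ring

lemma jac_aeval {D : Type*} [CommRing D] (g : Fin 2 → MvPolynomial (Fin 2) D)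
    (p q : MvPolynomial (Fin 2) D) :
    Jac (aeval g p) (aeval g q) = aeval g (Jac p q) * Jac (g 0) (g 1) := by
  simp only [Jac, pderiv_aeval_fin2, map_sub, map_mul]
  ring

lemma mem_adjoin_of_pderiv_one_eq_zero {D : Type*} [CommRing D] [IsDomain D] [CharZero D]
    {v : MvPolynomial (Fin 2) D} (h : pderiv 1 v = 0) :
    v ∈ Algebra.adjoin D ({X 0} : Set (MvPolynomial (Fin 2) D)) := by
  have hv : v ∈ supported D ({0} : Set (Fin 2)) := by
    rw [mem_supported]
    intro i hi
    rw [Finset.mem_coe, mem_vars] at hi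
    obtain ⟨m, hm, him⟩ := hi
    simp only [Set.mem_singleton_iff]
    by_contra hne
    have hi1 : i = 1 := by omega
    subst hi1
    have hm1 : m 1 ≠ 0 := Finsupp.mem_support_iff.mp him
    have hcoeff : coeff m v ≠ 0 := mem_support_iff.mp hm
    set m' : Fin 2 →₀ ℕ := m - Finsupp.single 1 1 with hm'
    have key := coeff_pderiv_aux (D := D) 1 m' v
    rw [h, coeff_zero] at key
    have hmm : m' + Finsupp.single 1 1 = m := by
      ext j
      simp only [hm', Finsupp.add_apply, Finsupp.tsub_apply, Finsupp.single_apply]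
      by_cases hj : j = 1
      · subst hj
        rw [if_pos rfl]
        omega
      · simp [Ne.symm hj]
    rw [hmm] at key
    have hcast : ((m' 1 + 1 : ℕ) : D) ≠ 0 := by
      exact Nat.cast_ne_zero.mpr (Nat.succ_ne_zero _)
    exact hcoeff (by
      rcases mul_eq_zero.mp key.symm with h' | h'
      · exact absurd h' hcast
      · exact h')
  simpa [supported, Set.image_singleton] using hv


/-- **`JC(2,D)` implies `CC(2,D)`.** Let `D` be an integral domain of characteristic
zero. If every `D`-algebra endomorphism of `D[x,y]` with invertible Jacobian is an
automorphism, then for all `A, B, w ∈ D[x,y]` with `Jac(A,B)` a unit of `D[x,y]` and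
`Jac(A,w) = 0`, we have `w ∈ D[A]`. -/
theorem jc_implies_cc {D : Type*} [CommRing D] [IsDomain D] [CharZero D]
    (JC : ∀ f : MvPolynomial (Fin 2) D →ₐ[D] MvPolynomial (Fin 2) D,
      IsUnit (Jac (f (X 0)) (f (X 1))) → Function.Bijective f) :
    ∀ A B w : MvPolynomial (Fin 2) D,
      IsUnit (Jac A B) → Jac A w = 0 → w ∈ Algebra.adjoin D {A} := by
  intro A B w hU h0
  set g : Fin 2 → MvPolynomial (Fin 2) D := ![A, B] with hg
  have hg0 : g 0 = A := rfl
  have hg1 : g 1 = B := rfl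
  have hUnit : IsUnit (Jac ((aeval g : MvPolynomial (Fin 2) D →ₐ[D] MvPolynomial (Fin 2) D) (X 0))
      ((aeval g : MvPolynomial (Fin 2) D →ₐ[D] MvPolynomial (Fin 2) D) (X 1))) := by
    have e0 : (aeval g : MvPolynomial (Fin 2) D →ₐ[D] MvPolynomial (Fin 2) D) (X 0) = A :=
      aeval_X g 0
    have e1 : (aeval g : MvPolynomial (Fin 2) D →ₐ[D] MvPolynomial (Fin 2) D) (X 1) = B :=
      aeval_X g 1
    rw [e0, e1]; exact hU
  have hbij := JC (aeval g) hUnit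
  obtain ⟨v, hv⟩ := hbij.2 w
  have hchain : Jac A w = aeval g (Jac (X 0) v) * Jac A B := by
    calc Jac A w = Jac (aeval g (X 0)) (aeval g v) := by rw [aeval_X, hg0, hv]
    _ = aeval g (Jac (X 0) v) * Jac (g 0) (g 1) := jac_aeval g _ v
    _ = _ := by rw [hg0, hg1]
  rw [h0] at hchain
  have hz : aeval g (Jac (X 0) v) = 0 := by
    rcases mul_eq_zero.mp hchain.symm with h' | h'
    · exact h'
    · exact absurd h' hU.ne_zero
  have hz2 : Jac (X 0) v = 0 := hbij.1 (by simpa using hz)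
  have hpd : pderiv 1 v = 0 := by
    have hJx : Jac (X 0) v = pderiv 1 v := by
      simp [Jac, pderiv_X_self, pderiv_X_of_ne (show (0 : Fin 2) ≠ 1 by decide)]
    rwa [hJx] at hz2
  have hmem := mem_adjoin_of_pderiv_one_eq_zero hpd
  have hmap : (aeval g : MvPolynomial (Fin 2) D →ₐ[D] MvPolynomial (Fin 2) D) v ∈
      (Algebra.adjoin D ({X 0} : Set (MvPolynomial (Fin 2) D))).map (aeval g) :=
    ⟨v, hmem, rfl⟩
  rw [AlgHom.map_adjoin, Set.image_singleton,
    show (aeval g : MvPolynomial (Fin 2) D →ₐ[D] MvPolynomial (Fin 2) D) (X 0) = A from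
      aeval_X g 0, hv] at hmap
  exact hmap
end
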